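/- Let g : ℝⁿ → ℝ⁻ be defined on a set containing all points below, let f, f̂ : D → D be self-maps of a set D ⊆ ℝⁿ, and let ĝ : D → ℝ be a function. Assume: f is Lipschitz on D with constant L_f > 1; g is Lipschitz on D with constant L_g; ‖f(z) − f̂(z)‖ ≤ ε_f for all z ∈ D; and |g(z) − ĝ(z)| ≤ ε_g for all z ∈ D. Then for every N ∈ ℕ and every z ∈ D it holds that |g(f^N(z)) − ĝ(f̂^N(z))| ≤ L_g · ((L_f)^N − 1)/(L_f − 1) · ε_f + ε_g, where f^N, f̂^N denote N-fold iterates. -/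
import Mathlib


/-- Composite error estimate: if `f` is `L_f`-Lipschitz (`L_f > 1`) and `g` is `L_g`-Lipschitz
on a set `D` into which `f, f̂` map, `‖f − f̂‖ ≤ ε_f` and `|g − ĝ| ≤ ε_g` on `D`, then
`|g(f^N(z)) − ĝ(f̂^N(z))| ≤ L_g (L_f^N − 1)/(L_f − 1) ε_f + ε_g` on `D`. -/
theorem composite_iterate_error
    (n : ℕ) (D : Set (EuclideanSpace ℝ (Fin n)))
    (f fhat : EuclideanSpace ℝ (Fin n) → EuclideanSpace ℝ (Fin n))
    (g ghat : EuclideanSpace ℝ (Fin n) → ℝ)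
    (hf : Set.MapsTo f D D) (hfhat : Set.MapsTo fhat D D)
    (Lf Lg εf εg : ℝ) (hLf : 1 < Lf) (hLg : 0 ≤ Lg)
    (hflip : ∀ z ∈ D, ∀ w ∈ D, ‖f z - f w‖ ≤ Lf * ‖z - w‖)
    (hglip : ∀ z ∈ D, ∀ w ∈ D, |g z - g w| ≤ Lg * ‖z - w‖)
    (hεf : ∀ z ∈ D, ‖f z - fhat z‖ ≤ εf)
    (hεg : ∀ z ∈ D, |g z - ghat z| ≤ εg) :
    ∀ (N : ℕ), ∀ z ∈ D,
      |g (f^[N] z) - ghat (fhat^[N] z)| ≤ Lg * ((Lf ^ N - 1) / (Lf - 1)) * εf + εg := by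
  intro N z hz
  have hLf0 : (0:ℝ) < Lf - 1 := by linarith
  have hεf0 : 0 ≤ εf := le_trans (norm_nonneg _) (hεf z hz)
  have hmem : ∀ k, f^[k] z ∈ D ∧ fhat^[k] z ∈ D := by
    intro k
    induction k with
    | zero => exact ⟨hz, hz⟩
    | succ k ih =>
      rw [Function.iterate_succ_apply', Function.iterate_succ_apply']
      exact ⟨hf ih.1, hfhat ih.2⟩
  have key : ∀ k, ‖f^[k] z - fhat^[k] z‖ ≤ (Lf ^ k - 1) / (Lf - 1) * εf := by
    intro k
    induction k with
    | zero => simp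
    | succ k ih =>
      rw [Function.iterate_succ_apply', Function.iterate_succ_apply']
      have h1 : ‖f (f^[k] z) - fhat (fhat^[k] z)‖ ≤
          ‖f (f^[k] z) - f (fhat^[k] z)‖ + ‖f (fhat^[k] z) - fhat (fhat^[k] z)‖ :=
        norm_sub_le_norm_sub_add_norm_sub _ _ _
      have h2 := hflip _ (hmem k).1 _ (hmem k).2
      have h3 := hεf _ (hmem k).2
      have h4 : Lf * ‖f^[k] z - fhat^[k] z‖ ≤ Lf * ((Lf ^ k - 1) / (Lf - 1) * εf) :=
        mul_le_mul_of_nonneg_left ih (by linarith)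
      have heq : Lf * ((Lf ^ k - 1) / (Lf - 1) * εf) + εf
          = (Lf ^ (k + 1) - 1) / (Lf - 1) * εf := by
        field_simp
        ring
      linarith
  have hg1 : |g (f^[N] z) - ghat (fhat^[N] z)| ≤
      |g (f^[N] z) - g (fhat^[N] z)| + |g (fhat^[N] z) - ghat (fhat^[N] z)| := by
    have := abs_sub_abs_le_abs_sub (g (f^[N] z)) (g (fhat^[N] z))
    calc |g (f^[N] z) - ghat (fhat^[N] z)|
        = |(g (f^[N] z) - g (fhat^[N] z)) + (g (fhat^[N] z) - ghat (fhat^[N] z))| := by ring_nf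
      _ ≤ _ := abs_add_le _ _
  have hg2 := hglip _ (hmem N).1 _ (hmem N).2
  have hg3 := hεg _ (hmem N).2
  have hg4 : Lg * ‖f^[N] z - fhat^[N] z‖ ≤ Lg * ((Lf ^ N - 1) / (Lf - 1) * εf) :=
    mul_le_mul_of_nonneg_left (key N) hLg
  calc |g (f^[N] z) - ghat (fhat^[N] z)| ≤ _ := hg1
    _ ≤ Lg * ((Lf ^ N - 1) / (Lf - 1) * εf) + εg := by linarith
    _ = Lg * ((Lf ^ N - 1) / (Lf - 1)) * εf + εg := by ring
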